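/- For a good semigroup S ⊂ ℤ_{≥0}^r with conductor c and weight function w, the following are equivalent: (i) w(c) = 0; (ii) w is Gorenstein symmetric, i.e., w(c − ℓ) = w(ℓ) for all lattice points 0 ≤ ℓ ≤ c; (iii) S is symmetric in the Garcia–Delgado sense: for all ℓ ∈ ℤ_{≥0}^r, ℓ ∈ S if and only if Δ(c − 𝟏 − ℓ) = ∅. -/

import Mathlib

open Finset

/-- Lattice points (we work in `ℤ^r`; nonnegativity is imposed via hypotheses). -/
abbrev Pt (r : ℕ) := Fin r → ℤ

/-- The `i`-th standard basis vector. -/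
def E {r : ℕ} (i : Fin r) : Pt r := Pi.single i 1

/-- `e_K = ∑_{i ∈ K} e_i`. -/
def eK {r : ℕ} (K : Finset (Fin r)) : Pt r := ∑ i ∈ K, E i

/-- `Δ̄ᵢ(ℓ) = {s ∈ S : sᵢ = ℓᵢ, sⱼ ≥ ℓⱼ ∀ j ≠ i}`. -/
def DeltaBarI {r : ℕ} (S : Set (Pt r)) (ℓ : Pt r) (i : Fin r) : Set (Pt r) :=
  {s | s ∈ S ∧ s i = ℓ i ∧ ∀ j, j ≠ i → ℓ j ≤ s j}

/-- `Δᵢ(ℓ) = {s ∈ S : sᵢ = ℓᵢ, sⱼ > ℓⱼ ∀ j ≠ i}`. -/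
def DeltaI {r : ℕ} (S : Set (Pt r)) (ℓ : Pt r) (i : Fin r) : Set (Pt r) :=
  {s | s ∈ S ∧ s i = ℓ i ∧ ∀ j, j ≠ i → ℓ j < s j}

/-- `Δ(ℓ) = ∪ᵢ Δᵢ(ℓ)`. -/
def Delta {r : ℕ} (S : Set (Pt r)) (ℓ : Pt r) : Set (Pt r) := ⋃ i, DeltaI S ℓ i

/-- A good (local) semigroup `S ⊂ ℤ_{≥0}^r` with conductor `c`. -/
structure GoodSemigroup (r : ℕ) where
  S : Set (Pt r)
  c : Pt r
  nonneg : ∀ s ∈ S, (0 : Pt r) ≤ s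
  zero_mem : (0 : Pt r) ∈ S
  add_mem : ∀ s ∈ S, ∀ t ∈ S, s + t ∈ S
  coord_zero : ∀ s ∈ S, ∀ i, s i = 0 → s = 0
  min_mem : ∀ s ∈ S, ∀ t ∈ S, s ⊓ t ∈ S
  prop3 : ∀ s ∈ S, ∀ t ∈ S, ∀ i, s i = t i →
    ∃ u ∈ S, s ⊓ t ≤ u ∧ s i < u i ∧ ∀ j, j ≠ i → s j ≠ t j → u j = (s ⊓ t) j
  conductor_nonneg : (0 : Pt r) ≤ c
  conductor_mem : ∀ ℓ : Pt r, c ≤ ℓ → ℓ ∈ S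
  conductor_min : ∀ c' : Pt r, 0 ≤ c' → (∀ ℓ, c' ≤ ℓ → ℓ ∈ S) → c ≤ c'

/-- `h` is the (combinatorial) Hilbert function of the good semigroup `G`. -/
def IsHilbert {r : ℕ} (G : GoodSemigroup r) (h : Pt r → ℤ) : Prop :=
  h 0 = 0 ∧ ∀ ℓ : Pt r, 0 ≤ ℓ → ∀ i : Fin r,
    (h (ℓ + E i) = h ℓ + 1 ↔ (DeltaBarI G.S ℓ i).Nonempty) ∧
    (h (ℓ + E i) = h ℓ ↔ ¬ (DeltaBarI G.S ℓ i).Nonempty)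

/-- `w` is the weight function of the good semigroup `G` (i.e. `w(ℓ) = 2h(ℓ) − |ℓ|`),
characterized by `w(0) = 0` and the step property. -/
def IsWeight {r : ℕ} (G : GoodSemigroup r) (w : Pt r → ℤ) : Prop :=
  w 0 = 0 ∧ ∀ ℓ : Pt r, 0 ≤ ℓ → ∀ i : Fin r,
    (w (ℓ + E i) = w ℓ + 1 ↔ (DeltaBarI G.S ℓ i).Nonempty) ∧
    (w (ℓ + E i) = w ℓ - 1 ↔ ¬ (DeltaBarI G.S ℓ i).Nonempty)

/-- Generalized local minimum point of the weight function. -/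
def GLM {r : ℕ} (w : Pt r → ℤ) (p : Pt r) : Prop :=
  0 ≤ p ∧ ∀ i : Fin r, 1 ≤ p i → w p < w (p - E i)

/-- Local minimum point of the weight function. -/
def LocMin {r : ℕ} (w : Pt r → ℤ) (p : Pt r) : Prop :=
  GLM w p ∧ ∀ i : Fin r, w p < w (p + E i)
namespace Stmt12

variable {r : ℕ}

theorem E_apply (i j : Fin r) : E i j = if j = i then 1 else 0 := by
  simp [E, Pi.single_apply]

theorem E_self (i : Fin r) : E i i = 1 := by simp [E_apply]

theorem E_ne {i j : Fin r} (h : j ≠ i) : E i j = 0 := by simp [E_apply, h]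

theorem E_nonneg (i : Fin r) : (0 : Pt r) ≤ E i :=
  Pi.le_def.mpr fun j => by rw [Pi.zero_apply, E_apply]; split <;> omega

theorem sumE (i : Fin r) : (∑ j, E i j) = 1 := by
  simp [E_apply]

theorem eq_of_sum_le_zero {a b : Pt r} (hab : a ≤ b) (h : (∑ j, (b j - a j)) ≤ 0) : a = b := by
  funext j
  have h1 := Pi.le_def.mp hab
  have h2 : b j - a j ≤ ∑ k, (b k - a k) := by
    exact Finset.single_le_sum (f := fun k => b k - a k) (fun k _ => by show 0 ≤ b k - a k; have := h1 k; omega) (mem_univ j)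
  have := h1 j; omega

theorem exists_lt_of_ne {a b : Pt r} (hab : a ≤ b) (h : a ≠ b) : ∃ i, a i < b i := by
  by_contra hc; push_neg at hc
  exact h (funext fun j => le_antisymm (Pi.le_def.mp hab j) (hc j))

theorem sum_step (a b : Pt r) (i : Fin r) :
    (∑ j, (b j - (a + E i) j)) = (∑ j, (b j - a j)) - 1 := by
  have h : ∀ j ∈ Finset.univ, b j - (a + E i) j = (b j - a j) - E i j :=
    fun j _ => by rw [Pi.add_apply]; ring
  rw [Finset.sum_congr rfl h, Finset.sum_sub_distrib, sumE]

theorem sum_sub_E (a : Pt r) (i : Fin r) :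
    (∑ j, (a - E i) j) = (∑ j, a j) - 1 := by
  have h : ∀ j ∈ Finset.univ, (a - E i) j = a j - E i j := fun j _ => by rw [Pi.sub_apply]
  rw [Finset.sum_congr rfl h, Finset.sum_sub_distrib, sumE]

end Stmt12
namespace Stmt12

variable {r : ℕ} (G : GoodSemigroup r)

theorem raise : ∀ (n : ℕ) (p m : Pt r), p ∈ G.S → p ≤ m →
    (∀ j, p j < m j → G.c j ≤ p j) → (∑ j, (m j - p j)) ≤ (n : ℤ) → m ∈ G.S := by
  intro n
  induction n with
  | zero =>
    intro p m hp hpm hcond hsum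
    rw [← eq_of_sum_le_zero hpm (by exact_mod_cast hsum)]
    exact hp
  | succ n ih =>
    intro p m hp hpm hcond hsum
    by_cases hpme : p = m
    · rw [← hpme]; exact hp
    obtain ⟨j, hj⟩ := exists_lt_of_ne hpm hpme
    have hcj : G.c j ≤ p j := hcond j hj
    classical
    set q : Pt r := fun k => if k = j then p j else max (G.c k) (p k) + 1 with hqdef
    have hq : q ∈ G.S := by
      apply G.conductor_mem
      apply Pi.le_def.mpr
      intro k
      by_cases hk : k = j
      · subst hk; simpa [hqdef] using hcj
      · show G.c k ≤ q k
        rw [hqdef]; simp only []; rw [if_neg hk]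
        have := le_max_left (G.c k) (p k); omega
    have hpq : p j = q j := by simp [hqdef]
    obtain ⟨z, hzS, hzge, hzj, hzeq⟩ := G.prop3 p hp q hq j hpq
    have hzk : ∀ k, k ≠ j → z k = p k := by
      intro k hk
      have hqk : q k = max (G.c k) (p k) + 1 := by rw [hqdef]; simp only []; rw [if_neg hk]
      have hne : p k ≠ q k := by rw [hqk]; have := le_max_right (G.c k) (p k); omega
      rw [hzeq k hk hne, Pi.inf_apply]
      have hple : p k ≤ q k := by rw [hqk]; have := le_max_right (G.c k) (p k); omega
      rw [min_eq_left hple]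
    set u : Pt r := fun k => if k = j then m j else max (G.c k) (z k) with hudef
    have hu : u ∈ G.S := by
      apply G.conductor_mem; apply Pi.le_def.mpr; intro k
      by_cases hk : k = j
      · subst hk
        have he : u k = m k := by simp [hudef]
        rw [he]; omega
      · show G.c k ≤ u k
        rw [hudef]; simp only []; rw [if_neg hk]; exact le_max_left _ _
    have hp'S : z ⊓ u ∈ G.S := G.min_mem z hzS u hu
    have huk : ∀ k, k ≠ j → u k = max (G.c k) (z k) := fun k hk => by
      rw [hudef]; simp only []; rw [if_neg hk]
    have huj : u j = m j := by simp [hudef]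
    have hp'k : ∀ k, k ≠ j → (z ⊓ u) k = p k := by
      intro k hk
      rw [Pi.inf_apply]
      have h1 : z k ≤ u k := by rw [huk k hk]; exact le_max_right _ _
      rw [min_eq_left h1, hzk k hk]
    have hp'j1 : p j < (z ⊓ u) j := by
      rw [Pi.inf_apply, huj]
      exact lt_min hzj hj
    have hp'j2 : (z ⊓ u) j ≤ m j := by
      rw [Pi.inf_apply, huj]
      exact min_le_right _ _
    apply ih (z ⊓ u) m hp'S
    · apply Pi.le_def.mpr; intro k
      by_cases hk : k = j
      · subst hk; exact hp'j2
      · rw [hp'k k hk]; exact Pi.le_def.mp hpm k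
    · intro k hk
      by_cases hkj : k = j
      · subst hkj; omega
      · rw [hp'k k hkj] at hk ⊢; exact hcond k hk
    · have hdiff : (∑ k, ((z ⊓ u) k - p k)) = (z ⊓ u) j - p j := by
        apply Finset.sum_eq_single_of_mem j (mem_univ j)
        intro k _ hk; rw [hp'k k hk]; ring
      have hsplit : (∑ k, (m k - (z ⊓ u) k)) = (∑ k, (m k - p k)) - ∑ k, ((z ⊓ u) k - p k) := by
        rw [← Finset.sum_sub_distrib]; apply Finset.sum_congr rfl; intros; ring
      rw [hsplit, hdiff]
      push_cast at hsum ⊢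
      linarith

theorem no_delta_cm1 (i : Fin r) (v : Pt r) (hv : v ∈ G.S) (hvi : v i = G.c i - 1)
    (hvj : ∀ j, j ≠ i → G.c j ≤ v j) : False := by
  have hv0 := Pi.le_def.mp (G.nonneg v hv)
  have hci : 1 ≤ G.c i := by have := hv0 i; rw [Pi.zero_apply] at this; omega
  have hcond : ∀ m : Pt r, G.c - E i ≤ m → m ∈ G.S := by
    intro m hm
    have hm' := Pi.le_def.mp hm
    by_cases hmi : G.c i ≤ m i
    · apply G.conductor_mem
      apply Pi.le_def.mpr; intro k
      by_cases hk : k = i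
      · subst hk; exact hmi
      · have := hm' k; rw [Pi.sub_apply, E_ne hk] at this; omega
    · have hmieq : m i = G.c i - 1 := by
        have := hm' i; rw [Pi.sub_apply, E_self] at this; omega
      have hmE : m + E i ∈ G.S := by
        apply G.conductor_mem; apply Pi.le_def.mpr; intro k
        rw [Pi.add_apply]
        by_cases hk : k = i
        · subst hk; rw [E_self]; omega
        · rw [E_ne hk]; have := hm' k; rw [Pi.sub_apply, E_ne hk] at this; omega
      have hpS : v ⊓ (m + E i) ∈ G.S := G.min_mem v hv _ hmE
      have hpk : ∀ k, (v ⊓ (m + E i)) k = min (v k) ((m + E i) k) := fun k => by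
        rw [Pi.inf_apply]
      have hpi : (v ⊓ (m + E i)) i = m i := by
        rw [hpk, Pi.add_apply, E_self, hvi, hmieq, min_eq_left (by omega)]
      apply raise G ((∑ j, (m j - (v ⊓ (m + E i)) j)).toNat) _ m hpS
      · apply Pi.le_def.mpr; intro k
        by_cases hk : k = i
        · subst hk; rw [hpi]
        · rw [hpk]
          refine le_trans (min_le_right _ _) ?_
          rw [Pi.add_apply, E_ne hk]; omega
      · intro k hkl
        by_cases hk : k = i
        · subst hk; rw [hpi] at hkl; omega
        · rw [hpk]
          have h1 := hvj k hk
          have h2 := hm' k; rw [Pi.sub_apply, E_ne hk] at h2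
          have h3 : G.c k ≤ (m + E i) k := by rw [Pi.add_apply, E_ne hk]; omega
          exact le_min h1 h3
      · exact Int.self_le_toNat _
  have hle := G.conductor_min (G.c - E i)
    (Pi.le_def.mpr fun k => by
      rw [Pi.zero_apply, Pi.sub_apply]
      have := Pi.le_def.mp G.conductor_nonneg k
      rw [Pi.zero_apply] at this
      by_cases hk : k = i
      · subst hk; rw [E_self]; omega
      · rw [E_ne hk]; omega)
    hcond
  have := Pi.le_def.mp hle i
  rw [Pi.sub_apply, E_self] at this
  omega

end Stmt12
namespace Stmt12

variable {r : ℕ} (G : GoodSemigroup r)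

theorem mem_of_deltas (ℓ : Pt r) (hl : 0 ≤ ℓ)
    (h : ∀ i, (DeltaBarI G.S ℓ i).Nonempty) : ℓ ∈ G.S := by
  rcases isEmpty_or_nonempty (Fin r) with he | hne
  · have : ℓ = 0 := funext fun i => (he.false i).elim
    rw [this]; exact G.zero_mem
  · choose s hs using h
    obtain ⟨i0⟩ := hne
    have huniv : (Finset.univ : Finset (Fin r)).Nonempty := ⟨i0, mem_univ i0⟩
    have hSmem : ∀ (T : Finset (Fin r)) (hT : T.Nonempty), T.inf' hT s ∈ G.S := by
      intro T hT
      induction hT using Finset.Nonempty.cons_induction with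
      | singleton i => simpa using (hs i).1
      | cons i T hiT hT ih => rw [Finset.inf'_cons hT]; exact G.min_mem _ (hs i).1 _ ih
    have key : Finset.univ.inf' huniv s = ℓ := by
      funext j
      rw [Finset.inf'_apply]
      apply le_antisymm
      · exact le_trans (Finset.inf'_le _ (mem_univ j)) (le_of_eq (hs j).2.1)
      · apply Finset.le_inf'
        intro i _
        by_cases hij : j = i
        · subst hij; exact le_of_eq (hs j).2.1.symm
        · exact (hs i).2.2 j hij
    rw [← key]; exact hSmem _ huniv

theorem not_both (ℓ : Pt r) (i : Fin r) (h1 : (DeltaBarI G.S ℓ i).Nonempty)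
    (h2 : (DeltaBarI G.S (G.c - ℓ - E i) i).Nonempty) : False := by
  obtain ⟨t, htS, hti, htj⟩ := h1
  obtain ⟨s, hsS, hsi, hsj⟩ := h2
  apply no_delta_cm1 G i (s + t) (G.add_mem s hsS t htS)
  · rw [Pi.add_apply, hti, hsi, Pi.sub_apply, Pi.sub_apply, E_self]; ring
  · intro j hj
    have ha := htj j hj
    have hb := hsj j hj
    rw [Pi.sub_apply, Pi.sub_apply, E_ne hj] at hb
    rw [Pi.add_apply]; omega

variable {w : Pt r → ℤ}

theorem fstep (hw : IsWeight G w) (ℓ : Pt r) (i : Fin r) (hl : 0 ≤ ℓ) (hc : ℓ + E i ≤ G.c) :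
    (w (G.c - (ℓ + E i)) - w (ℓ + E i) = w (G.c - ℓ) - w ℓ ∧
      ((DeltaBarI G.S ℓ i).Nonempty ↔ ¬ (DeltaBarI G.S (G.c - ℓ - E i) i).Nonempty)) ∨
    (w (G.c - (ℓ + E i)) - w (ℓ + E i) = (w (G.c - ℓ) - w ℓ) + 2 ∧
      ¬ (DeltaBarI G.S ℓ i).Nonempty ∧ ¬ (DeltaBarI G.S (G.c - ℓ - E i) i).Nonempty) := by
  have hd0 : (0 : Pt r) ≤ G.c - ℓ - E i := Pi.le_def.mpr fun j => by
    have := Pi.le_def.mp hc j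
    rw [Pi.add_apply] at this
    rw [Pi.zero_apply, Pi.sub_apply, Pi.sub_apply]; omega
  have e1 : G.c - (ℓ + E i) = G.c - ℓ - E i := by ring
  have e2 : (G.c - ℓ - E i) + E i = G.c - ℓ := by ring
  have H1 := hw.2 ℓ hl i
  have H2 := hw.2 (G.c - ℓ - E i) hd0 i
  by_cases hA : (DeltaBarI G.S ℓ i).Nonempty
  · have hB : ¬ (DeltaBarI G.S (G.c - ℓ - E i) i).Nonempty := fun hB => not_both G ℓ i hA hB
    have k1 : w (ℓ + E i) = w ℓ + 1 := H1.1.mpr hA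
    have k2 : w (G.c - ℓ) = w (G.c - ℓ - E i) - 1 := by
      have := H2.2.mpr hB; rw [e2] at this; omega
    exact Or.inl ⟨by rw [e1]; omega, by simp [hA, hB]⟩
  · by_cases hB : (DeltaBarI G.S (G.c - ℓ - E i) i).Nonempty
    · have k1 : w (ℓ + E i) = w ℓ - 1 := H1.2.mpr hA
      have k2 : w (G.c - ℓ) = w (G.c - ℓ - E i) + 1 := by
        have := H2.1.mpr hB; rw [e2] at this; omega
      exact Or.inl ⟨by rw [e1]; omega, by simp [hA, hB]⟩
    · have k1 : w (ℓ + E i) = w ℓ - 1 := H1.2.mpr hA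
      have k2 : w (G.c - ℓ) = w (G.c - ℓ - E i) - 1 := by
        have := H2.2.mpr hB; rw [e2] at this; omega
      exact Or.inr ⟨by rw [e1]; omega, hA, hB⟩

theorem f_mono (hw : IsWeight G w) : ∀ (n : ℕ) (a b : Pt r), 0 ≤ a → a ≤ b → b ≤ G.c →
    (∑ j, (b j - a j)) ≤ (n : ℤ) → w (G.c - a) - w a ≤ w (G.c - b) - w b := by
  intro n
  induction n with
  | zero =>
    intro a b ha hab hbc hsum
    rw [eq_of_sum_le_zero hab (by exact_mod_cast hsum)]
  | succ n ih =>
    intro a b ha hab hbc hsum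
    by_cases hab' : a = b
    · rw [hab']
    obtain ⟨i, hi⟩ := exists_lt_of_ne hab hab'
    have hstep : a + E i ≤ G.c := Pi.le_def.mpr fun j => by
      rw [Pi.add_apply]
      by_cases hj : j = i
      · subst hj; rw [E_self]
        have h1 := Pi.le_def.mp hbc j; omega
      · rw [E_ne hj]; have := Pi.le_def.mp (le_trans hab hbc) j; omega
    have ha' : (0 : Pt r) ≤ a + E i := le_trans ha (le_add_of_nonneg_right (E_nonneg i))
    have hab2 : a + E i ≤ b := Pi.le_def.mpr fun j => by
      rw [Pi.add_apply]
      by_cases hj : j = i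
      · subst hj; rw [E_self]; omega
      · rw [E_ne hj]; have := Pi.le_def.mp hab j; omega
    have hsum' : (∑ j, (b j - (a + E i) j)) ≤ (n : ℤ) := by
      rw [sum_step]; push_cast at hsum ⊢; linarith
    have h2 := ih (a + E i) b ha' hab2 hbc hsum'
    have h1 : w (G.c - a) - w a ≤ w (G.c - (a + E i)) - w (a + E i) := by
      rcases fstep G hw a i ha hstep with ⟨heq, -⟩ | ⟨heq, -⟩ <;> omega
    omega

end Stmt12
namespace Stmt12

variable {r : ℕ} (G : GoodSemigroup r)

theorem descend (hGD : ∀ ℓ : Pt r, 0 ≤ ℓ → (ℓ ∈ G.S ↔ Delta G.S (G.c - 1 - ℓ) = ∅))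
    (ℓ : Pt r) (i : Fin r) (hl : 0 ≤ ℓ) (hc : ℓ + E i ≤ G.c)
    (hA : ¬ (DeltaBarI G.S ℓ i).Nonempty)
    (hB : ¬ (DeltaBarI G.S (G.c - ℓ - E i) i).Nonempty) :
    ∃ k, k ≠ i ∧ 1 ≤ ℓ k ∧ ¬ (DeltaBarI G.S (ℓ - E k) i).Nonempty ∧
      ¬ (DeltaBarI G.S (G.c - (ℓ - E k) - E i) i).Nonempty := by
  have hc' := Pi.le_def.mp hc
  have hld : (0 : Pt r) ≤ G.c - ℓ - E i := Pi.le_def.mpr fun j => by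
    have := hc' j
    rw [Pi.add_apply] at this
    rw [Pi.zero_apply, Pi.sub_apply, Pi.sub_apply]; omega
  have hnotS : G.c - ℓ - E i ∉ G.S := fun hmem => hB ⟨_, hmem, rfl, fun j _ => le_rfl⟩
  have hne : Delta G.S (G.c - 1 - (G.c - ℓ - E i)) ≠ ∅ := fun he => hnotS ((hGD _ hld).mpr he)
  obtain ⟨s, hsmem⟩ := Set.nonempty_iff_ne_empty.mpr hne
  have hex : ∃ k, s ∈ DeltaI G.S (G.c - 1 - (G.c - ℓ - E i)) k := by
    simpa [Delta, Set.mem_iUnion] using hsmem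
  obtain ⟨k, hsS, hski, hskj⟩ := hex
  have hs0 := Pi.le_def.mp (G.nonneg s hsS)
  have hco : ∀ j, (G.c - 1 - (G.c - ℓ - E i)) j = ℓ j + E i j - 1 := fun j => by
    simp only [Pi.sub_apply, Pi.one_apply]; ring
  rw [hco] at hski
  have hskj' : ∀ m, m ≠ k → ℓ m + E i m - 1 < s m := fun m hm => by
    have := hskj m hm; rwa [hco] at this
  have hki : k ≠ i := by
    intro h; subst h
    apply hA
    refine ⟨s, hsS, ?_, ?_⟩
    · rw [hski, E_self]; ring
    · intro j hj
      have := hskj' j hj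
      rw [E_ne hj] at this; omega
  have hsk_eq : s k = ℓ k - 1 := by rw [hski, E_ne hki]; ring
  have hlk : 1 ≤ ℓ k := by have := hs0 k; rw [Pi.zero_apply] at this; omega
  refine ⟨k, hki, hlk, ?_, ?_⟩
  · rintro ⟨v, hvS, hvi, hvj⟩
    have hvi' : v i = ℓ i := by
      rw [hvi, Pi.sub_apply, E_ne (Ne.symm hki)]; ring
    have hvj' : ∀ j, j ≠ i → j ≠ k → ℓ j ≤ v j := fun j hj hjk => by
      have := hvj j hj; rw [Pi.sub_apply, E_ne hjk] at this; omega
    by_cases hvk : ℓ k ≤ v k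
    · apply hA
      refine ⟨v, hvS, hvi', ?_⟩
      intro j hj
      by_cases hjk : j = k
      · subst hjk; exact hvk
      · exact hvj' j hj hjk
    · have hvk' : v k = ℓ k - 1 := by
        have := hvj k hki; rw [Pi.sub_apply, E_self] at this; omega
      obtain ⟨z, hzS, hzge, hzk, hzeq⟩ := G.prop3 v hvS s hsS k (by rw [hvk', hsk_eq])
      have hzge' := Pi.le_def.mp hzge
      apply hA
      refine ⟨z, hzS, ?_, ?_⟩
      · have hsi : ℓ i < s i := by
          have := hskj' i (Ne.symm hki); rw [E_self] at this; omega
        have hnev : v i ≠ s i := by omega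
        rw [hzeq i (Ne.symm hki) hnev, Pi.inf_apply, hvi', min_eq_left (by omega)]
      · intro j hj
        by_cases hjk : j = k
        · subst hjk; omega
        · have h1 := hzge' j
          rw [Pi.inf_apply] at h1
          have h2 : ℓ j ≤ v j := hvj' j hj hjk
          have h3 : ℓ j ≤ s j := by have := hskj' j hjk; rw [E_ne hj] at this; omega
          have h4 : ℓ j ≤ min (v j) (s j) := le_min h2 h3
          omega
  · rintro ⟨v, hvS, hvi, hvj⟩
    apply hB
    have heq : ∀ j, (G.c - (ℓ - E k) - E i) j = (G.c - ℓ - E i) j + E k j := fun j => by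
      simp only [Pi.sub_apply]; ring
    refine ⟨v, hvS, ?_, ?_⟩
    · rw [hvi, heq, E_ne (Ne.symm hki)]; ring
    · intro j hj
      have h1 := hvj j hj; rw [heq] at h1
      have h2 : (0:ℤ) ≤ E k j := by rw [E_apply]; split <;> omega
      omega

theorem nobad (hGD : ∀ ℓ : Pt r, 0 ≤ ℓ → (ℓ ∈ G.S ↔ Delta G.S (G.c - 1 - ℓ) = ∅)) :
    ∀ (n : ℕ) (ℓ : Pt r) (i : Fin r), 0 ≤ ℓ → ℓ + E i ≤ G.c →
      (∑ j, ℓ j) ≤ (n : ℤ) →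
      ¬ (DeltaBarI G.S ℓ i).Nonempty → ¬ (DeltaBarI G.S (G.c - ℓ - E i) i).Nonempty → False := by
  intro n
  induction n with
  | zero =>
    intro ℓ i hl hc hsum hA hB
    obtain ⟨k, hki, hk1, -, -⟩ := descend G hGD ℓ i hl hc hA hB
    have h2 : ℓ k ≤ ∑ j, ℓ j := by
      exact Finset.single_le_sum (f := fun j => ℓ j)
        (fun j _ => by show (0:ℤ) ≤ ℓ j; have := Pi.le_def.mp hl j; rwa [Pi.zero_apply] at this)
        (mem_univ k)
    have : ((0:ℕ):ℤ) = 0 := by norm_num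
    omega
  | succ n ih =>
    intro ℓ i hl hc hsum hA hB
    obtain ⟨k, hki, hk1, hA', hB'⟩ := descend G hGD ℓ i hl hc hA hB
    apply ih (ℓ - E k) i
    · apply Pi.le_def.mpr; intro j
      rw [Pi.zero_apply, Pi.sub_apply]
      have h0 := Pi.le_def.mp hl j
      rw [Pi.zero_apply] at h0
      by_cases hj : j = k
      · subst hj; rw [E_self]; omega
      · rw [E_ne hj]; omega
    · refine le_trans ?_ hc
      have : ℓ - E k ≤ ℓ := sub_le_self ℓ (E_nonneg k)
      exact add_le_add this le_rfl
    · rw [sum_sub_E]; push_cast at hsum ⊢; linarith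
    · exact hA'
    · exact hB'

variable {w : Pt r → ℤ}

theorem f_const (hw : IsWeight G w)
    (hGD : ∀ ℓ : Pt r, 0 ≤ ℓ → (ℓ ∈ G.S ↔ Delta G.S (G.c - 1 - ℓ) = ∅)) :
    ∀ (n : ℕ) (a : Pt r), 0 ≤ a → a ≤ G.c →
      (∑ j, (G.c j - a j)) ≤ (n : ℤ) →
      w (G.c - a) - w a = w (G.c - G.c) - w G.c := by
  intro n
  induction n with
  | zero =>
    intro a ha hac hsum
    rw [eq_of_sum_le_zero hac (by exact_mod_cast hsum)]
  | succ n ih =>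
    intro a ha hac hsum
    by_cases hab : a = G.c
    · rw [hab]
    obtain ⟨i, hi⟩ := exists_lt_of_ne hac hab
    have hstep : a + E i ≤ G.c := Pi.le_def.mpr fun j => by
      rw [Pi.add_apply]
      by_cases hj : j = i
      · subst hj; rw [E_self]; omega
      · rw [E_ne hj]; have := Pi.le_def.mp hac j; omega
    have ha' : (0 : Pt r) ≤ a + E i := le_trans ha (le_add_of_nonneg_right (E_nonneg i))
    have hsum' : (∑ j, (G.c j - (a + E i) j)) ≤ (n : ℤ) := by
      rw [sum_step]; push_cast at hsum ⊢; linarith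
    have hnext := ih (a + E i) ha' hstep hsum'
    rcases fstep G hw a i ha hstep with ⟨heq, -⟩ | ⟨heq, hA, hB⟩
    · omega
    · exact (nobad G hGD ((∑ j, a j).toNat) a i ha hstep (Int.self_le_toNat _) hA hB).elim

end Stmt12

open Stmt12


/-- equivalence of (i) `w(c) = 0`, (ii) Gorenstein symmetry of `w`,
and (iii) symmetry of `S` in the sense of Garcia–Delgado. -/
theorem stmt12 {r : ℕ} (G : GoodSemigroup r) (w : Pt r → ℤ) (hw : IsWeight G w) :
    (w G.c = 0 ↔ ∀ ℓ : Pt r, 0 ≤ ℓ → ℓ ≤ G.c → w (G.c - ℓ) = w ℓ) ∧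
    (w G.c = 0 ↔ ∀ ℓ : Pt r, 0 ≤ ℓ →
        (ℓ ∈ G.S ↔ Delta G.S (G.c - 1 - ℓ) = ∅)) := by
  have hc0 := G.conductor_nonneg
  have key2 : w G.c = 0 → ∀ ℓ : Pt r, 0 ≤ ℓ → ℓ ≤ G.c → w (G.c - ℓ) - w ℓ = 0 := by
    intro h0 ℓ hl hlc
    have m1 := Stmt12.f_mono G hw ((∑ j, (ℓ j - (0 : Pt r) j)).toNat) 0 ℓ le_rfl hl hlc
      (Int.self_le_toNat _)
    have m2 := Stmt12.f_mono G hw ((∑ j, (G.c j - ℓ j)).toNat) ℓ G.c hl hlc le_rfl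
      (Int.self_le_toNat _)
    rw [sub_zero, hw.1] at m1
    rw [sub_self, hw.1] at m2
    omega
  constructor
  · constructor
    · intro h0 ℓ hl hlc
      have := key2 h0 ℓ hl hlc; omega
    · intro hsym
      have := hsym 0 le_rfl hc0
      rwa [sub_zero, hw.1] at this
  · constructor
    · intro h0 ℓ hl
      constructor
      · intro hmem
        apply Set.eq_empty_iff_forall_notMem.mpr
        intro s hs
        have hex : ∃ i, s ∈ DeltaI G.S (G.c - 1 - ℓ) i := by
          simpa [Delta, Set.mem_iUnion] using hs
        obtain ⟨i, hsS, hsieq, hsj⟩ := hex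
        apply Stmt12.no_delta_cm1 G i (s + ℓ) (G.add_mem s hsS ℓ hmem)
        · rw [Pi.sub_apply, Pi.sub_apply, Pi.one_apply] at hsieq
          rw [Pi.add_apply]; omega
        · intro j hj
          have h1 := hsj j hj
          rw [Pi.sub_apply, Pi.sub_apply, Pi.one_apply] at h1
          rw [Pi.add_apply]; omega
      · intro hdel
        set ℓ' : Pt r := ℓ ⊓ G.c with hl'def
        have hl'app : ∀ j, ℓ' j = min (ℓ j) (G.c j) := fun j => by
          rw [hl'def, Pi.inf_apply]
        have hl'0 : (0 : Pt r) ≤ ℓ' := le_inf hl hc0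
        have hl'c : ℓ' ≤ G.c := inf_le_right
        have hall : ∀ i, (DeltaBarI G.S ℓ' i).Nonempty := by
          intro i
          by_cases hi : ℓ i < G.c i
          · have hl'i : ℓ' i = ℓ i := by rw [hl'app]; exact min_eq_left hi.le
            have hstep : ℓ' + E i ≤ G.c := Pi.le_def.mpr fun j => by
              rw [Pi.add_apply]
              by_cases hj : j = i
              · subst hj; rw [E_self, hl'i]; omega
              · rw [E_ne hj]
                have := Pi.le_def.mp hl'c j; omega
            have hBempty : ¬ (DeltaBarI G.S (G.c - ℓ' - E i) i).Nonempty := by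
              rintro ⟨s, hsS, hsi, hsj⟩
              have hs0 := Pi.le_def.mp (G.nonneg s hsS)
              have hmem2 : s ∈ Delta G.S (G.c - 1 - ℓ) := by
                refine Set.mem_iUnion.mpr ⟨i, hsS, ?_, ?_⟩
                · rw [hsi]
                  rw [Pi.sub_apply, Pi.sub_apply, Pi.sub_apply, Pi.sub_apply, Pi.one_apply,
                    E_self, hl'i]
                  ring
                · intro j hj
                  have h1 := hsj j hj
                  rw [Pi.sub_apply, Pi.sub_apply, E_ne hj, hl'app] at h1
                  have h2 := hs0 j; rw [Pi.zero_apply] at h2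
                  rw [Pi.sub_apply, Pi.sub_apply, Pi.one_apply]
                  rcases le_total (ℓ j) (G.c j) with h | h
                  · rw [min_eq_left h] at h1; omega
                  · rw [min_eq_right h] at h1; omega
              rw [hdel] at hmem2; exact hmem2
            have h0le : (0 : Pt r) ≤ ℓ' + E i :=
              le_trans hl'0 (le_add_of_nonneg_right (Stmt12.E_nonneg i))
            rcases Stmt12.fstep G hw ℓ' i hl'0 hstep with ⟨heq, hiff⟩ | ⟨heq, hA, hB⟩
            · exact hiff.mpr hBempty
            · exfalso
              have k1 := key2 h0 ℓ' hl'0 hl'c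
              have k2 := key2 h0 (ℓ' + E i) h0le hstep
              omega
          · push_neg at hi
            refine ⟨G.c, G.conductor_mem G.c le_rfl, ?_, fun j _ => Pi.le_def.mp hl'c j⟩
            rw [hl'app]; exact (min_eq_right hi).symm
        have hl'S := Stmt12.mem_of_deltas G ℓ' hl'0 hall
        apply Stmt12.raise G ((∑ j, (ℓ j - ℓ' j)).toNat) ℓ' ℓ hl'S inf_le_left _
          (Int.self_le_toNat _)
        intro j hjlt
        rw [hl'app] at hjlt ⊢
        rcases le_total (ℓ j) (G.c j) with h | h
        · rw [min_eq_left h] at hjlt; exact absurd hjlt (lt_irrefl _)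
        · rw [min_eq_right h]
    · intro hGD
      have hfc := Stmt12.f_const G hw hGD ((∑ j, (G.c j - (0 : Pt r) j)).toNat) 0 le_rfl hc0
        (Int.self_le_toNat _)
      rw [sub_zero, hw.1, sub_self, hw.1] at hfc
      omega
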